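/- For every partition μ ⊆ n×n that is the complement of a rectangle i×j with both i < n and j < n, and every partition λ_s = (n^{n-s}, (n-1)^{s-1}) with 1 ≤ s ≤ n, one has maxdiag(μ \ λ_s) = 1; consequently the value maxdiag(μ\λ_s) (if μ = μ^T) or maxdiag(μ\λ_s) + maxdiag(μ^T\λ_s) (if μ ≠ μ^T) is independent of s. -/
import Mathlib


/-- `maxdiag S`: the maximal number of boxes of `S` on a single diagonal of slope `-1`. -/
def maxdiag (S : Finset (ℕ × ℕ)) : ℕ :=
  S.sup fun p => (S.filter fun q => q.1 + p.2 = q.2 + p.1).card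

/-- The boxes of the Young diagram of `f` inside the `n×n` square. -/
def boxesOf (n : ℕ) (f : ℕ → ℕ) : Finset (ℕ × ℕ) :=
  (Finset.Icc 1 n ×ˢ Finset.Icc 1 n).filter fun p => p.2 ≤ f p.1

/-- The partition `λ_s = (n^{n-s}, (n-1)^{s-1})`. -/
def lamJ (n s : ℕ) : ℕ → ℕ :=
  fun r => if r ≤ n - s then n else if r ≤ n - 1 then n - 1 else 0

/-- The complement of an `i×j` rectangle, right-justified in the `n×n` square:
the partition `(n^{n-i}, (n-j)^i)`. -/
def muC (n i j : ℕ) : ℕ → ℕ := fun r => if r ≤ n - i then n else n - j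

lemma mem_diff_iff (n i j s : ℕ) (p : ℕ × ℕ) :
    p ∈ boxesOf n (muC n i j) \ boxesOf n (lamJ n s) ↔
      (1 ≤ p.1 ∧ p.1 ≤ n) ∧ (1 ≤ p.2 ∧ p.2 ≤ n) ∧ p.2 ≤ muC n i j p.1 ∧
        lamJ n s p.1 < p.2 := by
  simp only [Finset.mem_sdiff, boxesOf, Finset.mem_filter, Finset.mem_product,
    Finset.mem_Icc]
  constructor
  · rintro ⟨⟨⟨h1, h2⟩, h3⟩, h4⟩
    refine ⟨h1, h2, h3, ?_⟩
    by_contra h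
    exact h4 ⟨⟨h1, h2⟩, by omega⟩
  · rintro ⟨h1, h2, h3, h4⟩
    exact ⟨⟨⟨h1, h2⟩, h3⟩, fun h => by omega⟩

lemma dichotomy (n i j s : ℕ) (hs1 : 1 ≤ s) (p : ℕ × ℕ)
    (hp : p ∈ boxesOf n (muC n i j) \ boxesOf n (lamJ n s)) :
    p.1 = n ∨ (p.1 < n ∧ p.2 = n) := by
  rw [mem_diff_iff] at hp
  obtain ⟨h1, h2, _, h4⟩ := hp
  unfold lamJ at h4
  split_ifs at h4 <;> omega

lemma unique_on_diag (n i j s : ℕ) (hs1 : 1 ≤ s) (p q : ℕ × ℕ)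
    (hp : p ∈ boxesOf n (muC n i j) \ boxesOf n (lamJ n s))
    (hq : q ∈ boxesOf n (muC n i j) \ boxesOf n (lamJ n s))
    (h : q.1 + p.2 = q.2 + p.1) : q = p := by
  have dp := dichotomy n i j s hs1 p hp
  have dq := dichotomy n i j s hs1 q hq
  rw [mem_diff_iff] at hp hq
  have : q.1 = p.1 ∧ q.2 = p.2 := by
    rcases dp with hp' | hp' <;> rcases dq with hq' | hq' <;> omega
  exact Prod.ext this.1 this.2

lemma maxdiag_one (n i j : ℕ) (hi : i < n) (hj : j < n) (s : ℕ)
    (hs1 : 1 ≤ s) (hs2 : s ≤ n) :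
    maxdiag (boxesOf n (muC n i j) \ boxesOf n (lamJ n s)) = 1 := by
  set S := boxesOf n (muC n i j) \ boxesOf n (lamJ n s) with hS
  have hmem : ((n, 1) : ℕ × ℕ) ∈ S := by
    rw [hS, mem_diff_iff]
    refine ⟨⟨by omega, le_refl n⟩, ⟨le_refl 1, by omega⟩, ?_, ?_⟩
    · unfold muC; split_ifs <;> omega
    · unfold lamJ; split_ifs <;> omega
  have hfilter : ∀ p ∈ S, (S.filter fun q => q.1 + p.2 = q.2 + p.1) = {p} := by
    intro p hp
    apply Finset.eq_singleton_iff_unique_mem.mpr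
    refine ⟨Finset.mem_filter.mpr ⟨hp, by omega⟩, ?_⟩
    intro q hq
    rw [Finset.mem_filter] at hq
    exact unique_on_diag n i j s hs1 p q hp hq.1 hq.2
  unfold maxdiag
  apply le_antisymm
  · apply Finset.sup_le
    intro p hp
    rw [hfilter p hp, Finset.card_singleton]
  · calc 1 = (S.filter fun q => q.1 + (1:ℕ) = q.2 + n).card := by
          rw [hfilter _ hmem, Finset.card_singleton]
      _ ≤ _ := Finset.le_sup (f := fun p => (S.filter fun q => q.1 + p.2 = q.2 + p.1).card) hmem

/-- For `μ` the complement of an `i×j` rectangle with `i < n` and `j < n`, and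
`λ_s = (n^{n-s}, (n-1)^{s-1})` with `1 ≤ s ≤ n`, one has `maxdiag(μ\λ_s) = 1`;
consequently the value `maxdiag(μ\λ_s)` (if `μ = μ^T`) resp.
`maxdiag(μ\λ_s) + maxdiag(μ^T\λ_s)` (if `μ ≠ μ^T`) is independent of `s`. -/
theorem stmt_12 (n i j : ℕ) (hi : i < n) (hj : j < n) :
    (∀ s : ℕ, 1 ≤ s → s ≤ n →
      maxdiag (boxesOf n (muC n i j) \ boxesOf n (lamJ n s)) = 1) ∧
    (muC n i j = muC n j i →
      ∀ s s' : ℕ, 1 ≤ s → s ≤ n → 1 ≤ s' → s' ≤ n →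
        maxdiag (boxesOf n (muC n i j) \ boxesOf n (lamJ n s)) =
          maxdiag (boxesOf n (muC n i j) \ boxesOf n (lamJ n s'))) ∧
    (muC n i j ≠ muC n j i →
      ∀ s s' : ℕ, 1 ≤ s → s ≤ n → 1 ≤ s' → s' ≤ n →
        maxdiag (boxesOf n (muC n i j) \ boxesOf n (lamJ n s)) +
            maxdiag (boxesOf n (muC n j i) \ boxesOf n (lamJ n s)) =
          maxdiag (boxesOf n (muC n i j) \ boxesOf n (lamJ n s')) +
            maxdiag (boxesOf n (muC n j i) \ boxesOf n (lamJ n s'))) := by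
  refine ⟨fun s hs1 hs2 => maxdiag_one n i j hi hj s hs1 hs2, ?_, ?_⟩
  · intro _ s s' hs1 hs2 hs1' hs2'
    rw [maxdiag_one n i j hi hj s hs1 hs2, maxdiag_one n i j hi hj s' hs1' hs2']
  · intro _ s s' hs1 hs2 hs1' hs2'
    rw [maxdiag_one n i j hi hj s hs1 hs2, maxdiag_one n i j hi hj s' hs1' hs2',
      maxdiag_one n j i hj hi s hs1 hs2, maxdiag_one n j i hj hi s' hs1' hs2']
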